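/- The generalized quaternion group Q_{2^n} of order 2^n (n ≥ 3) has exactly 2^{n−1} − 1 nonpower subgroups. -/

import Mathlib

/-- The power subgroup `G^m`: the subgroup generated by all `m`-th powers. -/
def powSub (G : Type*) [Group G] (m : ℕ) : Subgroup G :=
  Subgroup.closure {x : G | ∃ g : G, g ^ m = x}

/-- A subgroup is a nonpower subgroup if it is not `G^m` for any `m ≥ 1`. -/
def IsNonpower {G : Type*} [Group G] (H : Subgroup G) : Prop :=
  ¬ ∃ m : ℕ, 0 < m ∧ H = powSub G m

/-- The number of nonpower subgroups of `G`. -/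
noncomputable def nps (G : Type*) [Group G] : ℕ :=
  Nat.card {H : Subgroup G // IsNonpower H}

/-- The number of power subgroups of `G`. -/
noncomputable def ps (G : Type*) [Group G] : ℕ :=
  Nat.card {H : Subgroup G // ∃ m : ℕ, 0 < m ∧ H = powSub G m}

/-- The total number of subgroups of `G`. -/
noncomputable def numSubgroups (G : Type*) [Group G] : ℕ :=
  Nat.card (Subgroup G)

namespace QGNps
open QuaternionGroup

lemma inv_a {k : ℕ} (v : ZMod (2 * k)) : (a v : QuaternionGroup k)⁻¹ = a (-v) :=
  inv_eq_of_mul_eq_one_right (by rw [a_mul_a, add_neg_cancel]; rfl)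

lemma inv_xa {k : ℕ} (v : ZMod (2 * k)) : (xa v : QuaternionGroup k)⁻¹ = xa ((k : ZMod (2*k)) + v) := by
  refine inv_eq_of_mul_eq_one_right ?_
  rw [xa_mul_xa, one_def]
  congr 1
  have : ((2 * k : ℕ) : ZMod (2 * k)) = 0 := ZMod.natCast_self _
  push_cast at this ⊢
  linear_combination this

lemma a_pow {k : ℕ} (v : ZMod (2 * k)) (s : ℕ) : (a v : QuaternionGroup k) ^ s = a ((s : ZMod (2 * k)) * v) := by
  induction s with
  | zero => rw [pow_zero, Nat.cast_zero, zero_mul]; rfl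
  | succ s ih =>
    rw [pow_succ, ih, a_mul_a]
    congr 1
    push_cast
    ring

lemma dvd_char {Mo : ℕ} [NeZero Mo] {d : ℕ} (hd : d ∣ Mo) (x : ZMod Mo) :
    (∃ i : ZMod Mo, x = (d : ZMod Mo) * i) ↔ d ∣ x.val := by
  constructor
  · rintro ⟨i, rfl⟩
    have h : ((d : ZMod Mo) * i) = ((d * i.val : ℕ) : ZMod Mo) := by
      push_cast [ZMod.natCast_val, ZMod.cast_id]
      ring
    rw [h, ZMod.val_natCast]
    exact (Nat.dvd_mod_iff hd).2 ⟨i.val, rfl⟩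
  · rintro ⟨c, hc⟩
    refine ⟨(c : ZMod Mo), ?_⟩
    have h : x = ((x.val : ℕ) : ZMod Mo) := (ZMod.natCast_rightInverse x).symm
    rw [h, hc]
    push_cast
    ring
open QuaternionGroup

variable {m : ℕ}

instance : NeZero (2 * 2 ^ m) := ⟨by positivity⟩

/-- The cyclic subgroup generated by `a (2^t)`. -/
def Asub (m t : ℕ) : Subgroup (QuaternionGroup (2 ^ m)) where
  carrier := {x | ∃ i : ZMod (2 * 2 ^ m), x = a (((2 ^ t : ℕ) : ZMod (2 * 2 ^ m)) * i)}
  one_mem' := ⟨0, by rw [mul_zero]; rfl⟩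
  mul_mem' := by
    rintro x y ⟨i, rfl⟩ ⟨j, rfl⟩
    exact ⟨i + j, by rw [a_mul_a, mul_add]⟩
  inv_mem' := by
    rintro x ⟨i, rfl⟩
    exact ⟨-i, by rw [inv_a, mul_neg]⟩

/-- The subgroup generated by `a (2^k)` and `xa j` (for `k ≤ m`). -/
def Hsub (m k : ℕ) (hk : k ≤ m) (j : ZMod (2 * 2 ^ m)) : Subgroup (QuaternionGroup (2 ^ m)) where
  carrier := {x | (∃ i : ZMod (2 * 2 ^ m), x = a (((2 ^ k : ℕ) : ZMod (2 * 2 ^ m)) * i)) ∨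
    (∃ i : ZMod (2 * 2 ^ m), x = xa (j + ((2 ^ k : ℕ) : ZMod (2 * 2 ^ m)) * i))}
  one_mem' := Or.inl ⟨0, by rw [mul_zero]; rfl⟩
  mul_mem' := by
    have hpow : ((2 ^ k : ℕ) : ZMod (2 * 2 ^ m)) * ((2 ^ (m - k) : ℕ) : ZMod (2 * 2 ^ m)) =
        ((2 ^ m : ℕ) : ZMod (2 * 2 ^ m)) := by
      push_cast
      rw [← pow_add, Nat.add_sub_cancel' hk]
    rintro x y (⟨i, rfl⟩ | ⟨i, rfl⟩) (⟨i', rfl⟩ | ⟨i', rfl⟩)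
    · exact Or.inl ⟨i + i', by rw [a_mul_a, mul_add]⟩
    · exact Or.inr ⟨i' - i, by rw [a_mul_xa, mul_sub]; congr 1; ring⟩
    · exact Or.inr ⟨i + i', by rw [xa_mul_a, mul_add]; congr 1; ring⟩
    · refine Or.inl ⟨(2 ^ (m - k) : ℕ) + i' - i, ?_⟩
      rw [xa_mul_xa]
      congr 1
      rw [mul_sub, mul_add, hpow]
      ring
  inv_mem' := by
    have hpow : ((2 ^ k : ℕ) : ZMod (2 * 2 ^ m)) * ((2 ^ (m - k) : ℕ) : ZMod (2 * 2 ^ m)) =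
        ((2 ^ m : ℕ) : ZMod (2 * 2 ^ m)) := by
      push_cast
      rw [← pow_add, Nat.add_sub_cancel' hk]
    rintro x (⟨i, rfl⟩ | ⟨i, rfl⟩)
    · exact Or.inl ⟨-i, by rw [inv_a, mul_neg]⟩
    · refine Or.inr ⟨(2 ^ (m - k) : ℕ) + i, ?_⟩
      rw [inv_xa]
      congr 1
      rw [mul_add, hpow]
      push_cast
      ring

lemma a_mem_Asub_iff {t : ℕ} {v : ZMod (2 * 2 ^ m)} :
    a v ∈ Asub m t ↔ ∃ i, v = ((2 ^ t : ℕ) : ZMod (2 * 2 ^ m)) * i := by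
  simp [Asub, Subgroup.mem_mk, a.injEq]

lemma xa_not_mem_Asub {t : ℕ} {v : ZMod (2 * 2 ^ m)} : xa v ∉ Asub m t := by
  rintro ⟨i, h⟩
  cases h

lemma a_mem_Hsub_iff {k : ℕ} {hk : k ≤ m} {j v : ZMod (2 * 2 ^ m)} :
    a v ∈ Hsub m k hk j ↔ ∃ i, v = ((2 ^ k : ℕ) : ZMod (2 * 2 ^ m)) * i := by
  constructor
  · rintro (⟨i, h⟩ | ⟨i, h⟩)
    · exact ⟨i, by injection h⟩
    · exact absurd h (by intro h; cases h)
  · rintro ⟨i, rfl⟩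
    exact Or.inl ⟨i, rfl⟩

lemma xa_mem_Hsub_iff {k : ℕ} {hk : k ≤ m} {j v : ZMod (2 * 2 ^ m)} :
    xa v ∈ Hsub m k hk j ↔ ∃ i, v = j + ((2 ^ k : ℕ) : ZMod (2 * 2 ^ m)) * i := by
  constructor
  · rintro (⟨i, h⟩ | ⟨i, h⟩)
    · exact absurd h (by intro h; cases h)
    · exact ⟨i, by injection h⟩
  · rintro ⟨i, rfl⟩
    exact Or.inr ⟨i, rfl⟩

lemma two_pow_succ_cast_zero : ((2 ^ (m + 1) : ℕ) : ZMod (2 * 2 ^ m)) = 0 := by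
  rw [show (2:ℕ) ^ (m + 1) = 2 * 2 ^ m by ring]
  exact ZMod.natCast_self _

/-- Every additive subgroup of `ZMod (2 * 2^m)` consists of the multiples of `2^t`
for some `t ≤ m + 1`. -/
lemma addSubgroup_classify (S : AddSubgroup (ZMod (2 * 2 ^ m))) :
    ∃ t ≤ m + 1, (S : Set (ZMod (2 * 2 ^ m))) =
      {x | ∃ i, x = ((2 ^ t : ℕ) : ZMod (2 * 2 ^ m)) * i} := by
  have hex : ∃ t : ℕ, ((2 ^ t : ℕ) : ZMod (2 * 2 ^ m)) ∈ S :=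
    ⟨m + 1, by rw [two_pow_succ_cast_zero]; exact S.zero_mem⟩
  classical
  refine ⟨Nat.find hex, Nat.find_le ?_, ?_⟩
  · rw [two_pow_succ_cast_zero]; exact S.zero_mem
  have hfind : ((2 ^ Nat.find hex : ℕ) : ZMod (2 * 2 ^ m)) ∈ S := Nat.find_spec hex
  ext x
  simp only [SetLike.mem_coe, Set.mem_setOf_eq]
  constructor
  · intro hx
    by_cases hx0 : x = 0
    · exact ⟨0, by rw [hx0, mul_zero]⟩
    have hval : x.val ≠ 0 := fun h => hx0 ((ZMod.val_eq_zero x).1 h)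
    set s := (x.val).factorization 2 with hs
    set u := x.val / 2 ^ s with hu
    have hxu : 2 ^ s * u = x.val := Nat.ordProj_mul_ordCompl_eq_self x.val 2
    have hodd : ¬ 2 ∣ u := Nat.not_dvd_ordCompl Nat.prime_two hval
    have hcop : Nat.Coprime u (2 * 2 ^ m) := by
      rw [Nat.coprime_mul_iff_right]
      have h2 : Nat.Coprime u 2 :=
        ((Nat.Prime.coprime_iff_not_dvd Nat.prime_two).2 hodd).symm
      exact ⟨h2, h2.pow_right m⟩
    have hunit : IsUnit ((u : ℕ) : ZMod (2 * 2 ^ m)) := (ZMod.isUnit_iff_coprime u _).2 hcop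
    obtain ⟨w, hw⟩ : ∃ w : ZMod (2 * 2 ^ m), w * ((u : ℕ) : ZMod (2 * 2 ^ m)) = 1 := by
      obtain ⟨v, hv⟩ := hunit
      exact ⟨(v⁻¹ : _ˣ), by rw [← hv]; exact v.inv_mul⟩
    have hxx : x = ((2 ^ s * u : ℕ) : ZMod (2 * 2 ^ m)) := by
      rw [hxu]; exact (ZMod.natCast_rightInverse x).symm
    have hxs : ((2 ^ s : ℕ) : ZMod (2 * 2 ^ m)) ∈ S := by
      have h2 : (w.val : ZMod (2 * 2 ^ m)) = w := ZMod.natCast_rightInverse w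
      have h1 : ((2 ^ s : ℕ) : ZMod (2 * 2 ^ m)) = w.val • x := by
        rw [nsmul_eq_mul, h2, hxx, Nat.cast_mul, ← mul_assoc, mul_comm w, mul_assoc, hw,
          mul_one]
      rw [h1]
      exact S.nsmul_mem hx w.val
    have hts : Nat.find hex ≤ s := Nat.find_min' hex hxs
    refine ⟨((2 ^ (s - Nat.find hex) * u : ℕ) : ZMod (2 * 2 ^ m)), ?_⟩
    rw [hxx, ← Nat.cast_mul]
    congr 1
    rw [← mul_assoc, ← pow_add, Nat.add_sub_cancel' hts]
  · rintro ⟨i, rfl⟩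
    have h3 := S.nsmul_mem hfind i.val
    rw [nsmul_eq_mul, show ((i.val : ℕ) : ZMod (2 * 2 ^ m)) = i from
      ZMod.natCast_rightInverse i] at h3
    simpa [mul_comm] using h3

lemma subgroup_classify (H : Subgroup (QuaternionGroup (2 ^ m))) :
    (∃ t ≤ m + 1, H = Asub m t) ∨ (∃ k, ∃ hk : k ≤ m, ∃ j, H = Hsub m k hk j) := by
  let S : AddSubgroup (ZMod (2 * 2 ^ m)) :=
    { carrier := {i | a i ∈ H}
      zero_mem' := by show a 0 ∈ H; rw [← one_def]; exact H.one_mem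
      add_mem' := by
        intro p q hp hq
        have := H.mul_mem hp hq
        rwa [a_mul_a] at this
      neg_mem' := by
        intro p hp
        have := H.inv_mem hp
        rwa [inv_a] at this }
  obtain ⟨t, ht, hset⟩ := addSubgroup_classify S
  have hmem : ∀ v : ZMod (2 * 2 ^ m),
      (a v ∈ H) ↔ ∃ i, v = ((2 ^ t : ℕ) : ZMod (2 * 2 ^ m)) * i := by
    intro v
    constructor
    · intro hv
      have h : v ∈ (S : Set (ZMod (2 * 2 ^ m))) := hv
      rwa [hset] at h
    · intro hv
      have h : v ∈ (S : Set (ZMod (2 * 2 ^ m))) := by rw [hset]; exact hv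
      exact h
  by_cases hxa : ∃ j, xa j ∈ H
  · obtain ⟨j, hj⟩ := hxa
    have hz : a ((2 ^ m : ℕ) : ZMod (2 * 2 ^ m)) ∈ H := by
      have h := H.mul_mem hj hj
      rwa [xa_mul_xa, add_sub_cancel_right] at h
    have htm : t ≤ m := by
      obtain ⟨i, hi⟩ := (hmem _).1 hz
      have hdvd : 2 ^ t ∣ (((2 ^ m : ℕ) : ZMod (2 * 2 ^ m))).val :=
        (dvd_char (by rw [show 2 * 2 ^ m = 2 ^ (m + 1) by ring]; exact pow_dvd_pow 2 ht) _).1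
          ⟨i, hi⟩
      rw [ZMod.val_cast_of_lt (by have := Nat.one_le_two_pow (n := m); omega)] at hdvd
      exact (Nat.pow_dvd_pow_iff_le_right one_lt_two).1 hdvd
    refine Or.inr ⟨t, htm, j, ?_⟩
    ext x
    cases x with
    | a v => rw [a_mem_Hsub_iff]; exact hmem v
    | xa v =>
      rw [xa_mem_Hsub_iff]
      constructor
      · intro hv
        have h1 := H.mul_mem hv (H.inv_mem hj)
        rw [inv_xa, xa_mul_xa] at h1
        obtain ⟨i, hi⟩ := (hmem _).1 h1
        refine ⟨-i, ?_⟩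
        have h0 : ((2 ^ (m + 1) : ℕ) : ZMod (2 * 2 ^ m)) = 0 := two_pow_succ_cast_zero
        push_cast at hi h0 ⊢
        linear_combination -hi + h0
      · rintro ⟨i, rfl⟩
        have h2 : a (((2 ^ t : ℕ) : ZMod (2 * 2 ^ m)) * i) ∈ H := (hmem _).2 ⟨i, rfl⟩
        have h3 := H.mul_mem hj h2
        rwa [xa_mul_a] at h3
  · refine Or.inl ⟨t, ht, ?_⟩
    ext x
    cases x with
    | a v => rw [a_mem_Asub_iff]; exact hmem v
    | xa v =>
      simp only [xa_not_mem_Asub, iff_false]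
      exact fun h => hxa ⟨v, h⟩

lemma powSub_odd (c : ℕ) (hc : Odd c) : powSub (QuaternionGroup (2 ^ m)) c = ⊤ := by
  have hcop : Nat.Coprime c (2 * 2 ^ m) := by
    rw [Nat.coprime_mul_iff_right]
    have h2 : Nat.Coprime c 2 := by
      rw [Nat.coprime_comm]
      have := Nat.odd_iff.1 hc
      exact (Nat.Prime.coprime_iff_not_dvd Nat.prime_two).2 (by omega)
    exact ⟨h2, h2.pow_right m⟩
  obtain ⟨w, hw⟩ : ∃ w : ZMod (2 * 2 ^ m), (c : ZMod (2 * 2 ^ m)) * w = 1 := by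
    obtain ⟨v, hv⟩ := (ZMod.isUnit_iff_coprime c _).2 hcop
    exact ⟨(v⁻¹ : _ˣ), by rw [← hv]; exact v.mul_inv⟩
  have ha1 : (a 1 : QuaternionGroup (2 ^ m)) ∈ powSub (QuaternionGroup (2 ^ m)) c :=
    Subgroup.subset_closure ⟨a w, by rw [a_pow, hw]⟩
  have haall : ∀ v : ZMod (2 * 2 ^ m), a v ∈ powSub (QuaternionGroup (2 ^ m)) c := by
    intro v
    have h := pow_mem ha1 v.val
    rwa [a_one_pow, ZMod.natCast_rightInverse v] at h
  obtain ⟨s, hs⟩ := hc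
  have hxaw : ∃ w', (xa 0 : QuaternionGroup (2 ^ m)) ^ c = xa w' := by
    refine ⟨0 - (s : ZMod (2 * 2 ^ m)) * ((2 ^ m : ℕ) : ZMod (2 * 2 ^ m)), ?_⟩
    rw [hs, pow_succ, pow_mul, xa_sq, a_pow, a_mul_xa]
  obtain ⟨w', hw'⟩ := hxaw
  have hxw : (xa w' : QuaternionGroup (2 ^ m)) ∈ powSub (QuaternionGroup (2 ^ m)) c :=
    Subgroup.subset_closure ⟨xa 0, hw'.symm ▸ rfl⟩
  rw [eq_top_iff]
  rintro x -
  cases x with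
  | a v => exact haall v
  | xa v =>
    have h := mul_mem hxw (haall (v - w'))
    rwa [xa_mul_a, add_sub_cancel] at h

lemma powSub_two_pow (hm : 1 ≤ m) (t : ℕ) (ht1 : 1 ≤ t) :
    powSub (QuaternionGroup (2 ^ m)) (2 ^ t) = Asub m t := by
  apply le_antisymm
  · apply (Subgroup.closure_le _).2
    rintro x ⟨g, rfl⟩
    cases g with
    | a v =>
      rw [SetLike.mem_coe, a_pow]
      exact ⟨v, rfl⟩
    | xa v =>
      rw [SetLike.mem_coe, show (2:ℕ) ^ t = 2 * 2 ^ (t - 1) from by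
        rw [← pow_succ']; congr 1; omega, pow_mul, xa_sq, a_pow]
      refine ⟨((2 ^ (m - 1) : ℕ) : ZMod (2 * 2 ^ m)), ?_⟩
      congr 1
      rw [← Nat.cast_mul, ← Nat.cast_mul, ← pow_add, ← pow_add]
      congr 2
      omega
  · rintro x ⟨i, rfl⟩
    exact Subgroup.subset_closure ⟨a i, by rw [a_pow]⟩

lemma powSub_even (hm : 1 ≤ m) (c : ℕ) (hc : Even c) :
    powSub (QuaternionGroup (2 ^ m)) c ≤ Asub m 1 := by
  obtain ⟨s, rfl⟩ := hc
  apply (Subgroup.closure_le _).2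
  rintro x ⟨g, rfl⟩
  cases g with
  | a v =>
    rw [SetLike.mem_coe, a_pow]
    refine ⟨(s : ZMod (2 * 2 ^ m)) * v, ?_⟩
    push_cast
    ring_nf
  | xa v =>
    rw [SetLike.mem_coe, ← two_mul, pow_mul, xa_sq, a_pow]
    refine ⟨(s : ZMod (2 * 2 ^ m)) * ((2 ^ (m - 1) : ℕ) : ZMod (2 * 2 ^ m)), ?_⟩
    rw [show (2:ℕ) ^ m = 2 * 2 ^ (m - 1) from by rw [← pow_succ']; congr 1; omega]
    push_cast
    ring_nf

lemma a_one_not_mem_Asub_one : (a 1 : QuaternionGroup (2 ^ m)) ∉ Asub m 1 := by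
  intro h
  rw [a_mem_Asub_iff] at h
  have h1 : (1 : ZMod (2 * 2 ^ m)) = ((1 : ℕ) : ZMod (2 * 2 ^ m)) := by norm_num
  rw [h1] at h
  have hdvd : 2 ^ 1 ∣ (((1:ℕ) : ZMod (2 * 2 ^ m))).val :=
    (dvd_char (by rw [show 2 * 2 ^ m = 2 ^ (m + 1) by ring]; exact pow_dvd_pow 2 (by omega)) _).1 h
  rw [ZMod.val_cast_of_lt (by have := Nat.one_le_two_pow (n := m); omega)] at hdvd
  omega

lemma Asub_le_Asub_one {t : ℕ} (ht : 1 ≤ t) : Asub m t ≤ Asub m 1 := by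
  rintro x ⟨i, rfl⟩
  refine ⟨((2 ^ (t - 1) : ℕ) : ZMod (2 * 2 ^ m)) * i, ?_⟩
  rw [← mul_assoc, ← Nat.cast_mul, ← pow_add, Nat.add_sub_cancel' ht]

lemma a_one_mem_Asub_zero : (a 1 : QuaternionGroup (2 ^ m)) ∈ Asub m 0 :=
  ⟨1, by rw [pow_zero, Nat.cast_one, one_mul]⟩

lemma xa_mem_Hsub_self {k : ℕ} (hk : k ≤ m) (j : ZMod (2 * 2 ^ m)) : xa j ∈ Hsub m k hk j :=
  xa_mem_Hsub_iff.2 ⟨0, by rw [mul_zero, add_zero]⟩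

lemma isNonpower_iff (hm : 1 ≤ m) (H : Subgroup (QuaternionGroup (2 ^ m))) :
    IsNonpower H ↔ (H ≠ ⊤ ∧ ∀ t, 1 ≤ t → t ≤ m + 1 → H ≠ Asub m t) := by
  constructor
  · intro hnp
    constructor
    · rintro rfl
      exact hnp ⟨1, one_pos, (powSub_odd 1 odd_one).symm⟩
    · rintro t ht1 _ rfl
      exact hnp ⟨2 ^ t, by positivity, (powSub_two_pow hm t ht1).symm⟩
  · rintro ⟨hT, hA⟩ ⟨c, hc, rfl⟩
    rcases Nat.even_or_odd c with hev | hodd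
    · have hle := powSub_even hm c hev
      rcases subgroup_classify (powSub (QuaternionGroup (2 ^ m)) c) with
        ⟨t, ht, heq⟩ | ⟨k, hk, j, heq⟩
      · rcases Nat.eq_zero_or_pos t with rfl | ht1
        · have h1 : (a 1 : QuaternionGroup (2 ^ m)) ∈ powSub (QuaternionGroup (2 ^ m)) c := by
            rw [heq]; exact a_one_mem_Asub_zero
          exact a_one_not_mem_Asub_one (hle h1)
        · exact hA t ht1 ht heq
      · have h1 : xa j ∈ powSub (QuaternionGroup (2 ^ m)) c := by
          rw [heq]; exact xa_mem_Hsub_self hk j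
        exact xa_not_mem_Asub (hle h1)
    · exact hT (powSub_odd c hodd)

lemma Hsub_zero_eq_top (h0 : (0:ℕ) ≤ m) (j : ZMod (2 * 2 ^ m)) : Hsub m 0 h0 j = ⊤ := by
  rw [eq_top_iff]
  rintro x -
  cases x with
  | a v => exact a_mem_Hsub_iff.2 ⟨v, by rw [pow_zero, Nat.cast_one, one_mul]⟩
  | xa v => exact xa_mem_Hsub_iff.2 ⟨v - j, by rw [pow_zero, Nat.cast_one, one_mul,
      add_sub_cancel]⟩

lemma Hsub_congr {k : ℕ} (hk : k ≤ m) {j j' : ZMod (2 * 2 ^ m)}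
    (h : ∃ i, j' = j + ((2 ^ k : ℕ) : ZMod (2 * 2 ^ m)) * i) : Hsub m k hk j = Hsub m k hk j' := by
  obtain ⟨i0, rfl⟩ := h
  ext x
  cases x with
  | a v => rw [a_mem_Hsub_iff, a_mem_Hsub_iff]
  | xa v =>
    rw [xa_mem_Hsub_iff, xa_mem_Hsub_iff]
    constructor
    · rintro ⟨i, rfl⟩
      exact ⟨i - i0, by rw [mul_sub]; ring⟩
    · rintro ⟨i, rfl⟩
      exact ⟨i + i0, by rw [mul_add]; ring⟩

lemma pow_dvd_mod {t : ℕ} (ht : t ≤ m + 1) : (2:ℕ) ^ t ∣ 2 * 2 ^ m := by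
  rw [show 2 * 2 ^ m = 2 ^ (m + 1) by ring]
  exact pow_dvd_pow 2 ht

lemma cast_eq_of {c u v : ℕ} (hc : c ≤ m + 1) (hu : u < 2 ^ c) (hv : v < 2 ^ c)
    (h : ∃ i, (u : ZMod (2 * 2 ^ m)) = (v : ZMod (2 * 2 ^ m)) +
      ((2 ^ c : ℕ) : ZMod (2 * 2 ^ m)) * i) : u = v := by
  obtain ⟨i, hi⟩ := h
  have hni : NeZero ((2:ℕ) ^ c) := ⟨by positivity⟩
  let φ : ZMod (2 * 2 ^ m) →+* ZMod (2 ^ c) := ZMod.castHom (pow_dvd_mod hc) _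
  have h2 := congrArg φ hi
  rw [map_add, map_mul, map_natCast, map_natCast, map_natCast, ZMod.natCast_self,
    zero_mul, add_zero] at h2
  rw [ZMod.natCast_eq_natCast_iff'] at h2
  rwa [Nat.mod_eq_of_lt hu, Nat.mod_eq_of_lt hv] at h2

lemma nonpower_Asub_zero (hm : 1 ≤ m) : IsNonpower (Asub m 0) := by
  rw [isNonpower_iff hm]
  constructor
  · intro h
    exact xa_not_mem_Asub (h ▸ Subgroup.mem_top (xa 0 : QuaternionGroup (2 ^ m)))
  · intro t ht1 _ h
    exact a_one_not_mem_Asub_one (Asub_le_Asub_one ht1 (h ▸ a_one_mem_Asub_zero))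

lemma nonpower_Hsub (hm : 1 ≤ m) {k : ℕ} (hk1 : 1 ≤ k) (hk : k ≤ m) (j : ZMod (2 * 2 ^ m)) :
    IsNonpower (Hsub m k hk j) := by
  rw [isNonpower_iff hm]
  constructor
  · intro h
    have ha1 : (a 1 : QuaternionGroup (2 ^ m)) ∈ Hsub m k hk j := by
      rw [h]; trivial
    rw [a_mem_Hsub_iff, show (1 : ZMod (2 * 2 ^ m)) = ((1:ℕ) : ZMod (2 * 2 ^ m)) by norm_num]
      at ha1
    have hdvd := (dvd_char (pow_dvd_mod (by omega)) _).1 ha1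
    rw [ZMod.val_cast_of_lt (by have := Nat.one_le_two_pow (n := m); omega)] at hdvd
    have h2 : 1 < 2 ^ k := Nat.one_lt_two_pow_iff.2 (by omega)
    have := Nat.le_of_dvd one_pos hdvd
    omega
  · intro t _ _ h
    exact xa_not_mem_Asub (h ▸ xa_mem_Hsub_self hk j)

lemma Hsub_le_k {k k' : ℕ} (hk : k ≤ m) (hk' : k' ≤ m) {j j' : ZMod (2 * 2 ^ m)}
    (h : Hsub m k hk j ≤ Hsub m k' hk' j') : k' ≤ k := by
  have ha : (a ((2 ^ k : ℕ) : ZMod (2 * 2 ^ m)) : QuaternionGroup (2 ^ m)) ∈ Hsub m k hk j :=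
    a_mem_Hsub_iff.2 ⟨1, (mul_one _).symm⟩
  have ha' := h ha
  rw [a_mem_Hsub_iff] at ha'
  have hdvd := (dvd_char (pow_dvd_mod (by omega)) _).1 ha'
  rw [ZMod.val_cast_of_lt ?bound] at hdvd
  · exact (Nat.pow_dvd_pow_iff_le_right one_lt_two).1 hdvd
  case bound =>
    have : (2:ℕ) ^ k ≤ 2 ^ m := Nat.pow_le_pow_right (by norm_num) hk
    have : 0 < (2:ℕ) ^ m := by positivity
    omega

lemma Hsub_j_eq {k : ℕ} (hk : k ≤ m) {u v : ℕ} (hu : u < 2 ^ k) (hv : v < 2 ^ k)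
    (h : Hsub m k hk (u : ZMod (2 * 2 ^ m)) = Hsub m k hk (v : ZMod (2 * 2 ^ m))) : u = v := by
  have hx := xa_mem_Hsub_self hk ((u : ZMod (2 * 2 ^ m)))
  rw [h, xa_mem_Hsub_iff] at hx
  exact cast_eq_of (by omega) hu hv hx

/-- Index type for nonpower subgroups. -/
def Idx (m : ℕ) := Option (Σ k : Fin m, Fin (2 ^ (k.1 + 1)))

def toSub (m : ℕ) : Idx m → Subgroup (QuaternionGroup (2 ^ m))
  | none => Asub m 0
  | some ⟨k, j⟩ => Hsub m (k.1 + 1) k.2 ((j.1 : ℕ) : ZMod (2 * 2 ^ m))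

lemma toSub_nonpower (hm : 1 ≤ m) (x : Idx m) : IsNonpower (toSub m x) := by
  match x with
  | none => exact nonpower_Asub_zero hm
  | some ⟨k, j⟩ => exact nonpower_Hsub hm (by omega) k.2 _

lemma toSub_inj : Function.Injective (toSub m) := by
  rintro (_ | ⟨k, j⟩) (_ | ⟨k', j'⟩) h
  · rfl
  · exfalso
    have h' : Asub m 0 = Hsub m (k'.1 + 1) k'.2 ((j'.1 : ℕ) : ZMod (2 * 2 ^ m)) := h
    have hx := xa_mem_Hsub_self k'.2 ((j'.1 : ℕ) : ZMod (2 * 2 ^ m))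
    rw [← h'] at hx
    exact xa_not_mem_Asub hx
  · exfalso
    have h' : Asub m 0 = Hsub m (k.1 + 1) k.2 ((j.1 : ℕ) : ZMod (2 * 2 ^ m)) := h.symm
    have hx := xa_mem_Hsub_self k.2 ((j.1 : ℕ) : ZMod (2 * 2 ^ m))
    rw [← h'] at hx
    exact xa_not_mem_Asub hx
  · have h' : Hsub m (k.1 + 1) k.2 ((j.1 : ℕ) : ZMod (2 * 2 ^ m))
        = Hsub m (k'.1 + 1) k'.2 ((j'.1 : ℕ) : ZMod (2 * 2 ^ m)) := h
    have hkk : k.1 = k'.1 := by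
      have h1 := Hsub_le_k k.2 k'.2 h'.le
      have h2 := Hsub_le_k k'.2 k.2 h'.ge
      omega
    rcases k with ⟨k, hklt⟩
    rcases k' with ⟨k', hklt'⟩
    simp only at hkk
    subst hkk
    have hj : j = j' := Fin.ext (Hsub_j_eq (Nat.succ_le_of_lt hklt) j.2 j'.2 h')
    subst hj
    rfl

lemma toSub_surj (hm : 1 ≤ m) (H : Subgroup (QuaternionGroup (2 ^ m))) (hH : IsNonpower H) :
    ∃ x, toSub m x = H := by
  have hiff := (isNonpower_iff hm H).1 hH
  rcases subgroup_classify H with ⟨t, ht, rfl⟩ | ⟨k, hk, j, rfl⟩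
  · rcases Nat.eq_zero_or_pos t with rfl | ht1
    · exact ⟨none, rfl⟩
    · exact absurd rfl (hiff.2 t ht1 ht)
  · rcases Nat.eq_zero_or_pos k with rfl | hk1
    · exact absurd (Hsub_zero_eq_top hk j) hiff.1
    · obtain ⟨k', rfl⟩ : ∃ k', k = k' + 1 := ⟨k - 1, by omega⟩
      refine ⟨some ⟨⟨k', by omega⟩, ⟨j.val % 2 ^ (k' + 1),
        Nat.mod_lt _ (by positivity)⟩⟩, ?_⟩
      show Hsub m (k' + 1) hk (((j.val % 2 ^ (k' + 1) : ℕ)) : ZMod (2 * 2 ^ m)) = Hsub m (k' + 1) hk j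
      refine (Hsub_congr hk ⟨-((j.val / 2 ^ (k' + 1) : ℕ) : ZMod (2 * 2 ^ m)), ?_⟩).symm
      have hmd : 2 ^ (k' + 1) * (j.val / 2 ^ (k' + 1)) + j.val % 2 ^ (k' + 1) = j.val :=
        Nat.div_add_mod _ _
      have hj : ((j.val : ℕ) : ZMod (2 * 2 ^ m)) = j := ZMod.natCast_rightInverse j
      have := congrArg (fun x : ℕ => ((x : ℕ) : ZMod (2 * 2 ^ m))) hmd
      push_cast at this
      rw [hj] at this
      push_cast
      linear_combination this

lemma sum_two_pow (m : ℕ) : ∑ i ∈ Finset.range m, 2 ^ (i + 1) = 2 ^ (m + 1) - 2 := by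
  induction m with
  | zero => simp
  | succ s ih =>
    rw [Finset.sum_range_succ, ih]
    have h1 : (2:ℕ) ^ (s + 1 + 1) = 2 * 2 ^ (s + 1) := by ring
    have h2 : 1 < (2:ℕ) ^ (s + 1) := Nat.one_lt_two_pow_iff.2 (by omega)
    omega

lemma card_idx (m : ℕ) : Nat.card (Idx m) = 2 ^ (m + 1) - 1 := by
  have h : Nat.card (Idx m) = Fintype.card (Option (Σ k : Fin m, Fin (2 ^ (k.1 + 1)))) := by
    show Nat.card (Option (Σ k : Fin m, Fin (2 ^ (k.1 + 1)))) = _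
    exact Nat.card_eq_fintype_card
  rw [h, Fintype.card_option, Fintype.card_sigma]
  simp only [Fintype.card_fin]
  rw [Fin.sum_univ_eq_sum_range (fun i => 2 ^ (i + 1)) m]
  rw [sum_two_pow]
  have h2 : 1 < (2:ℕ) ^ (m + 1) := Nat.one_lt_two_pow_iff.2 (by omega)
  omega

lemma nps_eq (m : ℕ) (hm : 1 ≤ m) : nps (QuaternionGroup (2 ^ m)) = 2 ^ (m + 1) - 1 := by
  have e : Idx m ≃ {H : Subgroup (QuaternionGroup (2 ^ m)) // IsNonpower H} :=
    Equiv.ofBijective (fun x => ⟨toSub m x, toSub_nonpower hm x⟩)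
      ⟨fun x y h => toSub_inj (congrArg Subtype.val h),
       fun ⟨H, hH⟩ => (toSub_surj hm H hH).imp (fun x hx => Subtype.ext hx)⟩
  rw [nps, ← Nat.card_congr e, card_idx]

end QGNps


theorem nps_generalized_quaternion (n : ℕ) (hn : 3 ≤ n) :
    nps (QuaternionGroup (2 ^ (n - 2))) = 2 ^ (n - 1) - 1 := by
  rw [show n - 1 = (n - 2) + 1 by omega]
  exact QGNps.nps_eq (n - 2) (by omega)
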